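/- Let K ⊆ ℝ^m be a nonempty closed convex set, F : ℝ^m → ℝ^m a continuous mapping, and L ⊆ ℝ^m a cone. Define the Picard iteration x^{n+1} = P_K(x^n − F(x^n)). Suppose P_K and I − F are L-isotone, x⁰ ≤_L x¹, and there exists y ∈ ℝ^m such that x^n ≤_L y for all sufficiently large n. Then the sequence {x^n} is convergent and its limit x* is a solution of the variational inequality VI(F, K). -/

import Mathlib

open scoped RealInnerProductSpace
open Topology

set_option maxHeartbeats 1000000 in
/-- If `P_K` and `I − F` are `L`-isotone, `x⁰ ≤_L x¹` for the Picard
iteration `x^{n+1} = P_K(x^n − F(x^n))`, and the iterates are eventually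
`L`-bounded above, then the iteration converges and its limit solves the
variational inequality `VI(F, K)`. -/
theorem stmt12 (m : ℕ) (K : Set (EuclideanSpace ℝ (Fin m)))
    (hKne : K.Nonempty) (hKclosed : IsClosed K) (hKconv : Convex ℝ K)
    (F : EuclideanSpace ℝ (Fin m) → EuclideanSpace ℝ (Fin m))
    (hFcont : Continuous F)
    (L : Set (EuclideanSpace ℝ (Fin m)))
    (hLclosed : IsClosed L) (hLpointed : L ∩ (-L) = {0})
    (hLcone : ∀ lam mu : ℝ, 0 ≤ lam → 0 ≤ mu →
      ∀ x ∈ L, ∀ y ∈ L, lam • x + mu • y ∈ L)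
    (P : EuclideanSpace ℝ (Fin m) → EuclideanSpace ℝ (Fin m))
    (hP : ∀ x, P x ∈ K ∧ ∀ y ∈ K, dist x (P x) ≤ dist x y)
    (hPiso : ∀ x y, y - x ∈ L → P y - P x ∈ L)
    (hIFiso : ∀ x y, y - x ∈ L → (y - F y) - (x - F x) ∈ L)
    (x : ℕ → EuclideanSpace ℝ (Fin m))
    (hiter : ∀ n : ℕ, x (n + 1) = P (x n - F (x n)))
    (h01 : x 1 - x 0 ∈ L)
    (hbdd : ∃ (y : EuclideanSpace ℝ (Fin m)) (N : ℕ), ∀ n ≥ N, y - x n ∈ L) :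
    ∃ xs, Filter.Tendsto x Filter.atTop (nhds xs) ∧
      xs ∈ K ∧ ∀ y ∈ K, (0:ℝ) ≤ ⟪y - xs, F xs⟫ := by
  classical
  obtain ⟨y, N, hy⟩ := hbdd
  -- basic facts about the cone L
  have hzero : (0 : EuclideanSpace ℝ (Fin m)) ∈ L := by
    have h0 : (0 : EuclideanSpace ℝ (Fin m)) ∈ ({0} : Set (EuclideanSpace ℝ (Fin m))) := rfl
    rw [← hLpointed] at h0
    exact h0.1
  have hadd : ∀ a ∈ L, ∀ b ∈ L, a + b ∈ L := fun a ha b hb => by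
    simpa using hLcone 1 1 zero_le_one zero_le_one a ha b hb
  have hsmul : ∀ (c : ℝ), 0 ≤ c → ∀ a ∈ L, c • a ∈ L := fun c hc a ha => by
    simpa using hLcone c 0 hc le_rfl a ha 0 hzero
  have hpt : ∀ a ∈ L, -a ∈ L → a = 0 := fun a ha hna => by
    have h : a ∈ L ∩ (-L) := ⟨ha, Set.mem_neg.2 hna⟩
    rw [hLpointed] at h
    exact h
  -- the iterates are L-increasing
  have hdiff : ∀ n, x (n + 1) - x n ∈ L := by
    intro n
    induction n with
    | zero => exact h01
    | succ k ih =>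
      have h := hPiso (x k - F (x k)) (x (k + 1) - F (x (k + 1))) (hIFiso _ _ ih)
      rwa [← hiter (k + 1), ← hiter k] at h
  have hle : ∀ p q : ℕ, p ≤ q → x q - x p ∈ L := by
    intro p q hpq
    obtain ⟨k, rfl⟩ := Nat.exists_eq_add_of_le hpq
    clear hpq
    induction k with
    | zero => simpa using hzero
    | succ j ih =>
      show x ((p + j) + 1) - x p ∈ L
      rw [← sub_add_sub_cancel (x ((p + j) + 1)) (x (p + j)) (x p)]
      exact hadd _ (hdiff (p + j)) _ ih
  -- the iterates are norm-bounded from index N on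
  have hRex : ∃ R : ℝ, ∀ n ≥ N, ‖x n‖ ≤ R := by
    by_contra hcon
    push_neg at hcon
    choose n hnN hn using fun j : ℕ => hcon ((j : ℝ) + ‖x N‖ + 1)
    set w : ℕ → EuclideanSpace ℝ (Fin m) := fun j => x (n j) - x N with hw
    have hwL : ∀ j, w j ∈ L := fun j => hle N (n j) (hnN j)
    have hwnorm : ∀ j : ℕ, (j : ℝ) + 1 ≤ ‖w j‖ := by
      intro j
      have h1 := hn j
      have h2 : ‖x (n j)‖ - ‖x N‖ ≤ ‖w j‖ := norm_sub_norm_le _ _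
      linarith
    have hwpos : ∀ j, 0 < ‖w j‖ := fun j =>
      lt_of_lt_of_le (by positivity) (hwnorm j)
    set u : ℕ → EuclideanSpace ℝ (Fin m) := fun j => ‖w j‖⁻¹ • w j with hu
    have husphere : ∀ j, u j ∈ Metric.sphere (0 : EuclideanSpace ℝ (Fin m)) 1 := by
      intro j
      simp only [Metric.mem_sphere, dist_zero_right, hu, norm_smul, norm_inv, norm_norm]
      exact inv_mul_cancel₀ (hwpos j).ne'
    obtain ⟨a, ha_mem, φ, hφ, hφtend⟩ :=
      tendsto_subseq_of_bounded Metric.isBounded_sphere husphere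
    have haL : a ∈ L := hLclosed.mem_of_tendsto hφtend
      (Filter.Eventually.of_forall fun k =>
        hsmul _ (inv_nonneg.2 (norm_nonneg _)) _ (hwL (φ k)))
    have hanorm : ‖a‖ = 1 := by
      have : a ∈ Metric.sphere (0 : EuclideanSpace ℝ (Fin m)) 1 := by
        rwa [Metric.isClosed_sphere.closure_eq] at ha_mem
      simpa using this
    have hinv : Filter.Tendsto (fun k => ‖w (φ k)‖⁻¹) Filter.atTop (𝓝 0) := by
      have hb : ∀ k : ℕ, ‖w (φ k)‖⁻¹ ≤ ((k : ℝ) + 1)⁻¹ := by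
        intro k
        have h1 : (k : ℝ) + 1 ≤ ‖w (φ k)‖ := by
          have h2 := hwnorm (φ k)
          have hk : (k : ℝ) ≤ (φ k : ℝ) := by exact_mod_cast hφ.le_apply
          linarith
        exact inv_anti₀ (by positivity) h1
      have hg : Filter.Tendsto (fun k : ℕ => ((k : ℝ) + 1)⁻¹) Filter.atTop (𝓝 0) := by
        simpa [one_div] using (tendsto_one_div_add_atTop_nhds_zero_nat :
          Filter.Tendsto (fun n : ℕ => 1 / ((n : ℝ) + 1)) Filter.atTop (𝓝 0))
      exact squeeze_zero (fun k => inv_nonneg.2 (norm_nonneg _)) hb hg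
    have hqL : ∀ j, ‖w j‖⁻¹ • (y - x (n j)) ∈ L := fun j =>
      hsmul _ (inv_nonneg.2 (norm_nonneg _)) _ (hy (n j) (hnN j))
    have hqeq : ∀ j, ‖w j‖⁻¹ • (y - x (n j)) = ‖w j‖⁻¹ • (y - x N) - u j := by
      intro j
      rw [hu, ← smul_sub]
      congr 1
      rw [hw]
      simp only [sub_sub_sub_cancel_right]
    have hqtend : Filter.Tendsto (fun k => ‖w (φ k)‖⁻¹ • (y - x (n (φ k))))
        Filter.atTop (𝓝 (-a)) := by
      have h1 : Filter.Tendsto (fun k => ‖w (φ k)‖⁻¹ • (y - x N) - u (φ k))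
          Filter.atTop (𝓝 ((0 : ℝ) • (y - x N) - a)) :=
        (hinv.smul_const (y - x N)).sub hφtend
      rw [zero_smul, zero_sub] at h1
      exact h1.congr fun k => (hqeq (φ k)).symm
    have hnaL : -a ∈ L := hLclosed.mem_of_tendsto hqtend
      (Filter.Eventually.of_forall fun k => hqL (φ k))
    have : a = 0 := hpt a haL hnaL
    rw [this] at hanorm
    simp at hanorm
  obtain ⟨R, hR⟩ := hRex
  -- global norm bound
  have hbound : ∃ R' : ℝ, ∀ n, ‖x n‖ ≤ R' := by
    refine ⟨max R (∑ i ∈ Finset.range N, ‖x i‖), fun n => ?_⟩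
    rcases le_or_gt N n with h | h
    · exact le_max_of_le_left (hR n h)
    · exact le_max_of_le_right <|
        Finset.single_le_sum (f := fun i => ‖x i‖) (fun i _ => norm_nonneg _)
          (Finset.mem_range.2 h)
  obtain ⟨R', hR'⟩ := hbound
  have hmem : ∀ n, x n ∈ Metric.closedBall (0 : EuclideanSpace ℝ (Fin m)) R' := fun n => by
    simpa [Metric.mem_closedBall, dist_zero_right] using hR' n
  obtain ⟨xs, _, φ, hφ, hφtend⟩ :=
    tendsto_subseq_of_bounded Metric.isBounded_closedBall hmem
  -- any subsequential limit is an upper bound of the whole sequence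
  have hupper : ∀ (ψ : ℕ → ℕ), StrictMono ψ →
      ∀ z, Filter.Tendsto (x ∘ ψ) Filter.atTop (𝓝 z) → ∀ n, z - x n ∈ L := by
    intro ψ hψ z hz n
    have ht : Filter.Tendsto (fun k => x (ψ k) - x n) Filter.atTop (𝓝 (z - x n)) :=
      hz.sub tendsto_const_nhds
    refine hLclosed.mem_of_tendsto ht ?_
    filter_upwards [Filter.eventually_ge_atTop n] with k hk
    exact hle n (ψ k) (le_trans hk hψ.le_apply)
  -- the whole sequence converges to xs
  have hxtend : Filter.Tendsto x Filter.atTop (𝓝 xs) := by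
    by_contra hcon
    rw [Metric.tendsto_atTop] at hcon
    push_neg at hcon
    obtain ⟨ε, hε, hfreq⟩ := hcon
    obtain ⟨ψ, hψ, hψprop⟩ := Filter.extraction_of_frequently_atTop
      (Filter.frequently_atTop.2 hfreq)
    obtain ⟨xt, _, θ, hθ, hθtend⟩ :=
      tendsto_subseq_of_bounded Metric.isBounded_closedBall (fun k => hmem (ψ k))
    have hθtend' : Filter.Tendsto (x ∘ (ψ ∘ θ)) Filter.atTop (𝓝 xt) := hθtend
    have h1 : ∀ n, xt - x n ∈ L := hupper (ψ ∘ θ) (hψ.comp hθ) xt hθtend'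
    have h2 : ∀ n, xs - x n ∈ L := hupper φ hφ xs hφtend
    have h3 : xs - xt ∈ L := by
      have ht : Filter.Tendsto (fun k => xs - x (ψ (θ k))) Filter.atTop (𝓝 (xs - xt)) :=
        tendsto_const_nhds.sub hθtend'
      exact hLclosed.mem_of_tendsto ht (Filter.Eventually.of_forall fun k => h2 _)
    have h4 : xt - xs ∈ L := by
      have ht : Filter.Tendsto (fun k => xt - x (φ k)) Filter.atTop (𝓝 (xt - xs)) :=
        tendsto_const_nhds.sub hφtend
      exact hLclosed.mem_of_tendsto ht (Filter.Eventually.of_forall fun k => h1 _)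
    have hts : xt = xs := by
      have h0 := hpt (xt - xs) h4 (by simpa [neg_sub] using h3)
      exact sub_eq_zero.1 h0
    have hdist : Filter.Tendsto (fun k => dist (x (ψ (θ k))) xs) Filter.atTop
        (𝓝 (dist xt xs)) := hθtend'.dist tendsto_const_nhds
    have hεle : ε ≤ dist xt xs :=
      ge_of_tendsto hdist (Filter.Eventually.of_forall fun k => hψprop (θ k))
    rw [hts, dist_self] at hεle
    linarith
  -- characterization of the projection
  have hproj : ∀ u, ∀ w ∈ K, ⟪u - P u, w - P u⟫ ≤ 0 := by
    intro u
    haveI : Nonempty K := ⟨⟨P u, (hP u).1⟩⟩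
    have hbdd2 : BddBelow (Set.range (fun w : K => ‖u - (w : EuclideanSpace ℝ (Fin m))‖)) := by
      refine ⟨0, ?_⟩
      rintro b ⟨w, rfl⟩
      exact norm_nonneg _
    have heq : ‖u - P u‖ = ⨅ w : K, ‖u - w‖ := by
      refine le_antisymm (le_ciInf fun w => ?_) (ciInf_le hbdd2 ⟨P u, (hP u).1⟩)
      have h := (hP u).2 w w.2
      rwa [dist_eq_norm, dist_eq_norm] at h
    exact (norm_eq_iInf_iff_real_inner_le_zero hKconv (hP u).1).1 heq
  have hx1 : Filter.Tendsto (fun n => x (n + 1)) Filter.atTop (𝓝 xs) :=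
    hxtend.comp (Filter.tendsto_add_atTop_nat 1)
  have hxsK : xs ∈ K := by
    refine hKclosed.mem_of_tendsto hx1 (Filter.Eventually.of_forall fun n => ?_)
    rw [hiter n]
    exact (hP _).1
  refine ⟨xs, hxtend, hxsK, fun w hw => ?_⟩
  have hFt : Filter.Tendsto (fun n => x n - F (x n)) Filter.atTop (𝓝 (xs - F xs)) :=
    hxtend.sub ((hFcont.tendsto xs).comp hxtend)
  have hq : ∀ n, ⟪(x n - F (x n)) - x (n + 1), w - x (n + 1)⟫ ≤ 0 := by
    intro n
    rw [hiter n]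
    exact hproj _ w hw
  have hlim : Filter.Tendsto (fun n => ⟪(x n - F (x n)) - x (n + 1), w - x (n + 1)⟫)
      Filter.atTop (𝓝 ⟪(xs - F xs) - xs, w - xs⟫) :=
    (hFt.sub hx1).inner (tendsto_const_nhds.sub hx1)
  have hle0 : ⟪(xs - F xs) - xs, w - xs⟫ ≤ 0 :=
    le_of_tendsto hlim (Filter.Eventually.of_forall hq)
  have heq2 : ⟪(xs - F xs) - xs, w - xs⟫ = -⟪w - xs, F xs⟫ := by
    rw [sub_sub_cancel_left, inner_neg_left, real_inner_comm]
  rw [heq2] at hle0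
  linarith
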